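/- Let H be a finite-dimensional Hopf algebra with invertible antipode. The map F: H^* \to H^*, F(\varphi) = \varphi(a_i ? b_i) (where R = a_i \otimes b_i is an R-matrix for H) is a linear isomorphism with inverse F^{-1}(\varphi) = \varphi(S^{-1}(a_i) ? b_i). -/

import Mathlib

open scoped TensorProduct
open TensorProduct

variable {k A : Type} [Field k] [Ring A] [HopfAlgebra k A]

/-- The linear map `x ↦ c x d` on `H`. -/
noncomputable def conjMap (c d : A) : A →ₗ[k] A :=
  (LinearMap.mulRight k d) ∘ₗ (LinearMap.mulLeft k c)

open Coalgebra in
/-- product representation -/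
noncomputable def mulRepr {c d : A} {ι₁ ι₂ : Type*} (rc : Coalgebra.Repr k c ι₁)
    (rd : Coalgebra.Repr k d ι₂) :
    Coalgebra.Repr k (c * d) (ι₁ × ι₂) where
  index := rc.index ×ˢ rd.index
  left := fun p => rc.left p.1 * rd.left p.2
  right := fun p => rc.right p.1 * rd.right p.2
  eq := by
    rw [Finset.sum_product]
    simp only [← Algebra.TensorProduct.tmul_mul_tmul]
    rw [← Finset.sum_mul_sum, rc.eq, rd.eq, Bialgebra.comul_mul]

noncomputable def tri (f g h : A →ₗ[k] A) : A ⊗[k] (A ⊗[k] A) →ₗ[k] A :=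
  LinearMap.mul' k A ∘ₗ TensorProduct.map f (LinearMap.mul' k A ∘ₗ TensorProduct.map g h)

@[simp] lemma tri_tmul (f g h : A →ₗ[k] A) (x y z : A) :
    tri f g h (x ⊗ₜ[k] (y ⊗ₜ[k] z)) = f x * (g y * h z) := by
  simp [tri]

open Coalgebra in
lemma coassoc_tri {ι₀ : Type*} {κ Λ : ι₀ → Type*}
    (f g h : A →ₗ[k] A) (c : A) (r : Coalgebra.Repr k c ι₀)
    (r1 : (i : ι₀) → Coalgebra.Repr k (r.left i) (κ i))
    (r2 : (i : ι₀) → Coalgebra.Repr k (r.right i) (Λ i)) :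
    ∑ i ∈ r.index, ∑ j ∈ (r1 i).index,
        f ((r1 i).left j) * (g ((r1 i).right j) * h (r.right i))
      = ∑ i ∈ r.index, ∑ j ∈ (r2 i).index,
        f (r.left i) * (g ((r2 i).left j) * h ((r2 i).right j)) := by
  have H := Coalgebra.sum_tmul_tmul_eq r r1 r2
  have := congrArg (tri (k := k) f g h) H
  simpa [map_sum] using this

open Coalgebra in
lemma sum_smul_counit_right {c : A} {ι₀ : Type*} (r : Coalgebra.Repr k c ι₀) :
    ∑ i ∈ r.index, (counit (R := k) (r.right i)) • r.left i = c := by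
  have H := Coalgebra.sum_tmul_counit_eq (R := k) r
  calc ∑ i ∈ r.index, (counit (R := k) (r.right i)) • r.left i
      = TensorProduct.rid k A (∑ i ∈ r.index, r.left i ⊗ₜ[k] counit (R := k) (r.right i)) := by
        simp only [map_sum, TensorProduct.rid_tmul]
    _ = TensorProduct.rid k A (c ⊗ₜ[k] 1) := by rw [H]
    _ = c := by simp

open Coalgebra in
lemma sum_smul_counit_left {c : A} {ι₀ : Type*} (r : Coalgebra.Repr k c ι₀) :
    ∑ i ∈ r.index, (counit (R := k) (r.left i)) • r.right i = c := by
  have H := Coalgebra.sum_counit_tmul_eq (R := k) r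
  calc ∑ i ∈ r.index, (counit (R := k) (r.left i)) • r.right i
      = TensorProduct.lid k A (∑ i ∈ r.index, counit (R := k) (r.left i) ⊗ₜ[k] r.right i) := by
        simp only [map_sum, TensorProduct.lid_tmul]
    _ = TensorProduct.lid k A ((1 : k) ⊗ₜ[k] c) := by rw [H]
    _ = c := by simp

lemma antipode_one' : HopfAlgebra.antipode (R := k) (1 : A) = 1 := by
  have := HopfAlgebra.mul_antipode_rTensor_comul_apply (R := k) (a := (1 : A))
  simpa [Bialgebra.comul_one, Algebra.TensorProduct.one_def] using this

lemma sum_comm3 {ι₁ ι₂ : Type*} {κ : ι₁ → Type*} (s : Finset ι₁) (t : Finset ι₂)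
    (u : ∀ i, Finset (κ i)) {M : Type*} [AddCommMonoid M] (f : ∀ i, κ i → ι₂ → M) :
    ∑ i ∈ s, ∑ p ∈ u i, ∑ q ∈ t, f i p q = ∑ q ∈ t, ∑ i ∈ s, ∑ p ∈ u i, f i p q :=
  (Finset.sum_congr rfl fun i _ => Finset.sum_comm).trans Finset.sum_comm

lemma sum_comm4 {ι₁ ι₂ : Type*} {κ : ι₁ → Type*} {μ : ι₂ → Type*} (s : Finset ι₁)
    (u : ∀ i, Finset (κ i)) (t : Finset ι₂) (v : ∀ j, Finset (μ j))
    {M : Type*} [AddCommMonoid M] (f : ∀ i, κ i → ∀ j, μ j → M) :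
    ∑ i ∈ s, ∑ p ∈ u i, ∑ j ∈ t, ∑ q ∈ v j, f i p j q
      = ∑ j ∈ t, ∑ q ∈ v j, ∑ i ∈ s, ∑ p ∈ u i, f i p j q := by
  rw [sum_comm3 s t u (fun i p j => ∑ q ∈ v j, f i p j q)]
  exact Finset.sum_congr rfl fun j _ => sum_comm3 s (v j) u (fun i p q => f i p j q)

open Coalgebra HopfAlgebra in
lemma antipode_mul' (x y : A) :
    antipode (R := k) (x * y) = antipode (R := k) y * antipode (R := k) x := by
  classical
  let ra := Coalgebra.Repr.arbitrary k x
  let rb := Coalgebra.Repr.arbitrary k y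
  let r1a : (i : A × A) → Coalgebra.Repr k (ra.left i) (A × A) := fun i => Coalgebra.Repr.arbitrary k _
  let r2a : (i : A × A) → Coalgebra.Repr k (ra.right i) (A × A) := fun i => Coalgebra.Repr.arbitrary k _
  let r1b : (j : A × A) → Coalgebra.Repr k (rb.left j) (A × A) := fun j => Coalgebra.Repr.arbitrary k _
  let r2b : (j : A × A) → Coalgebra.Repr k (rb.right j) (A × A) := fun j => Coalgebra.Repr.arbitrary k _
  set X : A := ∑ i ∈ ra.index, ∑ j ∈ rb.index, ∑ p ∈ (r2a i).index, ∑ q ∈ (r2b j).index,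
      antipode (R := k) (ra.left i * rb.left j) *
        ((r2a i).left p * ((r2b j).left q *
          (antipode (R := k) ((r2b j).right q) * antipode (R := k) ((r2a i).right p)))) with hX
  -- Claim A : X = antipode (x * y)
  have collapseB : ∀ (j : A × A) (w : A), ∑ q ∈ (r2b j).index,
      (r2b j).left q * (antipode (R := k) ((r2b j).right q) * w)
        = counit (R := k) (rb.right j) • w := by
    intro j w
    calc ∑ q ∈ (r2b j).index, (r2b j).left q * (antipode (R := k) ((r2b j).right q) * w)
        = (∑ q ∈ (r2b j).index, (r2b j).left q * antipode (R := k) ((r2b j).right q)) * w := by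
          rw [Finset.sum_mul]
          exact Finset.sum_congr rfl fun q _ => (mul_assoc _ _ _).symm
      _ = (counit (R := k) (rb.right j) • (1 : A)) * w := by
          rw [HopfAlgebra.sum_mul_antipode_eq_smul (r2b j)]
      _ = counit (R := k) (rb.right j) • w := by rw [smul_mul_assoc, one_mul]
  have collapseA : ∀ (i : A × A) (w : A), ∑ p ∈ (r2a i).index,
      (r2a i).left p * (antipode (R := k) ((r2a i).right p) * w)
        = counit (R := k) (ra.right i) • w := by
    intro i w
    calc ∑ p ∈ (r2a i).index, (r2a i).left p * (antipode (R := k) ((r2a i).right p) * w)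
        = (∑ p ∈ (r2a i).index, (r2a i).left p * antipode (R := k) ((r2a i).right p)) * w := by
          rw [Finset.sum_mul]
          exact Finset.sum_congr rfl fun q _ => (mul_assoc _ _ _).symm
      _ = (counit (R := k) (ra.right i) • (1 : A)) * w := by
          rw [HopfAlgebra.sum_mul_antipode_eq_smul (r2a i)]
      _ = counit (R := k) (ra.right i) • w := by rw [smul_mul_assoc, one_mul]
  have step1 : X = ∑ i ∈ ra.index, ∑ j ∈ rb.index, ∑ p ∈ (r2a i).index,
      antipode (R := k) (ra.left i * rb.left j) *
        ((r2a i).left p * (counit (R := k) (rb.right j) • antipode (R := k) ((r2a i).right p))) := by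
    rw [hX]
    refine Finset.sum_congr rfl fun i _ => Finset.sum_congr rfl fun j _ =>
      Finset.sum_congr rfl fun p _ => ?_
    rw [← Finset.mul_sum, ← Finset.mul_sum, collapseB j]
  have step2 : X = ∑ i ∈ ra.index, ∑ j ∈ rb.index, counit (R := k) (rb.right j) •
      (counit (R := k) (ra.right i) • antipode (R := k) (ra.left i * rb.left j)) := by
    rw [step1]
    refine Finset.sum_congr rfl fun i _ => Finset.sum_congr rfl fun j _ => ?_
    rw [← Finset.mul_sum]
    simp only [mul_smul_comm]
    rw [← Finset.smul_sum, HopfAlgebra.sum_mul_antipode_eq_smul (r2a i)]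
    simp [mul_smul_comm]
  have hA : X = antipode (R := k) (x * y) := by
    rw [step2]
    have h3 : ∀ i ∈ ra.index, ∑ j ∈ rb.index, counit (R := k) (rb.right j) •
        (counit (R := k) (ra.right i) • antipode (R := k) (ra.left i * rb.left j))
        = counit (R := k) (ra.right i) • antipode (R := k) (ra.left i * y) := by
      intro i _
      conv_rhs => rw [← sum_smul_counit_right rb]
      rw [Finset.mul_sum, map_sum, Finset.smul_sum]
      refine Finset.sum_congr rfl fun j _ => ?_
      rw [mul_smul_comm, map_smul, smul_comm]
    rw [Finset.sum_congr rfl h3]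
    conv_rhs => rw [← sum_smul_counit_right ra]
    rw [Finset.sum_mul, map_sum]
    refine Finset.sum_congr rfl fun i _ => ?_
    rw [smul_mul_assoc, map_smul]
  -- Claim B : X = antipode y * antipode x
  have Y1 : X = ∑ j ∈ rb.index, ∑ q ∈ (r2b j).index, ∑ i ∈ ra.index, ∑ p ∈ (r2a i).index,
      antipode (R := k) (ra.left i * rb.left j) *
        ((r2a i).left p * ((r2b j).left q *
          (antipode (R := k) ((r2b j).right q) * antipode (R := k) ((r2a i).right p)))) := by
    rw [hX, Finset.sum_comm]
    exact Finset.sum_congr rfl fun j _ => sum_comm3 _ _ _ _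
  have stepB1 : X = ∑ j ∈ rb.index, ∑ q ∈ (r2b j).index, ∑ i ∈ ra.index, ∑ p ∈ (r1a i).index,
      antipode (R := k) ((r1a i).left p * rb.left j) *
        ((r1a i).right p * ((r2b j).left q *
          (antipode (R := k) ((r2b j).right q) * antipode (R := k) (ra.right i)))) := by
    rw [Y1]
    refine Finset.sum_congr rfl fun j _ => Finset.sum_congr rfl fun q _ => ?_
    have := coassoc_tri (k := k)
      ((antipode (R := k)) ∘ₗ LinearMap.mulRight k (rb.left j))
      LinearMap.id
      (LinearMap.mulLeft k ((r2b j).left q) ∘ₗ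
        LinearMap.mulLeft k (antipode (R := k) ((r2b j).right q)) ∘ₗ (antipode (R := k)))
      x ra r1a r2a
    simpa only [LinearMap.comp_apply, LinearMap.mulLeft_apply, LinearMap.mulRight_apply,
      LinearMap.id_coe, id_eq] using this.symm
  have Y2 : X = ∑ i ∈ ra.index, ∑ p ∈ (r1a i).index, ∑ j ∈ rb.index, ∑ q ∈ (r2b j).index,
      antipode (R := k) ((r1a i).left p * rb.left j) *
        ((r1a i).right p * ((r2b j).left q *
          (antipode (R := k) ((r2b j).right q) * antipode (R := k) (ra.right i)))) := by
    rw [stepB1]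
    exact (sum_comm4 _ _ _ _ _).symm
  have stepB2 : X = ∑ i ∈ ra.index, ∑ p ∈ (r1a i).index, ∑ j ∈ rb.index, ∑ q ∈ (r1b j).index,
      antipode (R := k) ((r1a i).left p * (r1b j).left q) *
        (((r1a i).right p * (r1b j).right q) *
          (antipode (R := k) (rb.right j) * antipode (R := k) (ra.right i))) := by
    rw [Y2]
    refine Finset.sum_congr rfl fun i _ => Finset.sum_congr rfl fun p _ => ?_
    have := coassoc_tri (k := k)
      ((antipode (R := k)) ∘ₗ LinearMap.mulLeft k ((r1a i).left p))
      (LinearMap.mulLeft k ((r1a i).right p))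
      (LinearMap.mulRight k (antipode (R := k) (ra.right i)) ∘ₗ (antipode (R := k)))
      y rb r1b r2b
    simp only [LinearMap.comp_apply, LinearMap.mulLeft_apply, LinearMap.mulRight_apply,
      LinearMap.id_coe, id_eq, mul_assoc] at this ⊢
    exact this.symm
  have stepB3 : X = ∑ i ∈ ra.index, ∑ j ∈ rb.index,
      (counit (R := k) (ra.left i) * counit (R := k) (rb.left j)) •
        (antipode (R := k) (rb.right j) * antipode (R := k) (ra.right i)) := by
    rw [stepB2]
    refine Finset.sum_congr rfl fun i _ => ?_
    rw [Finset.sum_comm]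
    refine Finset.sum_congr rfl fun j _ => ?_
    have hprod := HopfAlgebra.sum_antipode_mul_eq_smul (R := k) (mulRepr (r1a i) (r1b j))
    have hprod2 : ∑ p ∈ (r1a i).index, ∑ q ∈ (r1b j).index,
        antipode (R := k) ((r1a i).left p * (r1b j).left q) *
          ((r1a i).right p * (r1b j).right q)
        = counit (R := k) (ra.left i * rb.left j) • (1 : A) :=
      (Finset.sum_product _ _ _).symm.trans hprod
    calc ∑ p ∈ (r1a i).index, ∑ q ∈ (r1b j).index,
          antipode (R := k) ((r1a i).left p * (r1b j).left q) *
            (((r1a i).right p * (r1b j).right q) *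
              (antipode (R := k) (rb.right j) * antipode (R := k) (ra.right i)))
        = (∑ p ∈ (r1a i).index, ∑ q ∈ (r1b j).index,
            antipode (R := k) ((r1a i).left p * (r1b j).left q) *
              ((r1a i).right p * (r1b j).right q)) *
            (antipode (R := k) (rb.right j) * antipode (R := k) (ra.right i)) := by
          rw [Finset.sum_mul]
          refine Finset.sum_congr rfl fun p _ => ?_
          rw [Finset.sum_mul]
          exact Finset.sum_congr rfl fun q _ => (mul_assoc _ _ _).symm
      _ = (counit (R := k) (ra.left i * rb.left j) • (1 : A)) *
            (antipode (R := k) (rb.right j) * antipode (R := k) (ra.right i)) := by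
          rw [hprod2]
      _ = (counit (R := k) (ra.left i) * counit (R := k) (rb.left j)) •
            (antipode (R := k) (rb.right j) * antipode (R := k) (ra.right i)) := by
          rw [smul_mul_assoc, one_mul, Bialgebra.counit_mul]
  have hB : X = antipode (R := k) y * antipode (R := k) x := by
    rw [stepB3]
    have h4 : ∀ i ∈ ra.index, ∑ j ∈ rb.index,
        (counit (R := k) (ra.left i) * counit (R := k) (rb.left j)) •
          (antipode (R := k) (rb.right j) * antipode (R := k) (ra.right i))
        = counit (R := k) (ra.left i) •
            (antipode (R := k) y * antipode (R := k) (ra.right i)) := by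
      intro i _
      conv_rhs => rw [← sum_smul_counit_left rb]
      rw [map_sum, Finset.sum_mul, Finset.smul_sum]
      refine Finset.sum_congr rfl fun j _ => ?_
      rw [map_smul, smul_mul_assoc, mul_smul]
    rw [Finset.sum_congr rfl h4]
    conv_rhs => rw [show antipode (R := k) x
      = antipode (R := k) (∑ i ∈ ra.index, counit (R := k) (ra.left i) • ra.right i) from by
        rw [sum_smul_counit_left ra]]
    rw [map_sum, Finset.mul_sum]
    refine Finset.sum_congr rfl fun i _ => ?_
    rw [map_smul, mul_smul_comm]
  rw [← hA, hB]

section SinvLemmas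
variable (Sinv : A →ₗ[k] A)
  (hS1 : ∀ x : A, Sinv (HopfAlgebra.antipode (R := k) x) = x)
  (hS2 : ∀ x : A, HopfAlgebra.antipode (R := k) (Sinv x) = x)

include hS1 hS2 in
open Coalgebra in
lemma sum_right_mul_sinv {c : A} {ι₀ : Type*} (r : Coalgebra.Repr k c ι₀) :
    ∑ i ∈ r.index, r.right i * Sinv (r.left i) = (counit (R := k) c) • 1 := by
  have hinj : Function.Injective (HopfAlgebra.antipode (R := k) (A := A)) :=
    Function.LeftInverse.injective hS1
  apply hinj
  rw [map_sum, map_smul, antipode_one']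
  calc ∑ i ∈ r.index, HopfAlgebra.antipode (R := k) (r.right i * Sinv (r.left i))
      = ∑ i ∈ r.index, r.left i * HopfAlgebra.antipode (R := k) (r.right i) := by
        refine Finset.sum_congr rfl fun i _ => ?_
        rw [antipode_mul', hS2]
    _ = (counit (R := k) c) • 1 := HopfAlgebra.sum_mul_antipode_eq_smul r

include hS1 hS2 in
open Coalgebra in
lemma sum_sinv_mul_left {c : A} {ι₀ : Type*} (r : Coalgebra.Repr k c ι₀) :
    ∑ i ∈ r.index, Sinv (r.right i) * r.left i = (counit (R := k) c) • 1 := by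
  have hinj : Function.Injective (HopfAlgebra.antipode (R := k) (A := A)) :=
    Function.LeftInverse.injective hS1
  apply hinj
  rw [map_sum, map_smul, antipode_one']
  calc ∑ i ∈ r.index, HopfAlgebra.antipode (R := k) (Sinv (r.right i) * r.left i)
      = ∑ i ∈ r.index, HopfAlgebra.antipode (R := k) (r.left i) * r.right i := by
        refine Finset.sum_congr rfl fun i _ => ?_
        rw [antipode_mul', hS2]
    _ = (counit (R := k) c) • 1 := HopfAlgebra.sum_antipode_mul_eq_smul r

end SinvLemmas

open Coalgebra in
/-- The map `F : H* → H*`, `F(φ) = φ(aᵢ ? bᵢ)`, is a linear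
isomorphism with inverse `F⁻¹(φ) = φ(S⁻¹(aᵢ) ? bᵢ)`. -/
theorem F_map_is_isomorphism
    [FiniteDimensional k A]
    (Sinv : A →ₗ[k] A)
    (hS1 : ∀ x : A, Sinv (HopfAlgebra.antipode (R := k) x) = x)
    (hS2 : ∀ x : A, HopfAlgebra.antipode (R := k) (Sinv x) = x)
    -- the R-matrix
    (ι : Type) [Fintype ι] (a b : ι → A)
    (hIntertwine : ∀ x : A, (∑ i, a i ⊗ₜ[k] b i) * Coalgebra.comul x
        = (TensorProduct.comm k A A) (Coalgebra.comul x) * (∑ i, a i ⊗ₜ[k] b i))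
    (hex1 : (∑ i, (Coalgebra.comul (R := k) (a i)) ⊗ₜ[k] b i : (A ⊗[k] A) ⊗[k] A)
        = (∑ i, (a i ⊗ₜ[k] (1:A)) ⊗ₜ[k] b i) * (∑ i, ((1:A) ⊗ₜ[k] a i) ⊗ₜ[k] b i))
    (hex2 : (∑ i, a i ⊗ₜ[k] (Coalgebra.comul (R := k) (b i)) : A ⊗[k] (A ⊗[k] A))
        = (∑ i, a i ⊗ₜ[k] ((1:A) ⊗ₜ[k] b i)) * (∑ i, a i ⊗ₜ[k] (b i ⊗ₜ[k] (1:A))))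
    -- `R⁻¹ = (S⁻¹ ⊗ id)(R)`
    (hRinv : (∑ i, a i ⊗ₜ[k] b i) * (∑ i, Sinv (a i) ⊗ₜ[k] b i) = 1)
    (hRinv' : (∑ i, Sinv (a i) ⊗ₜ[k] b i) * (∑ i, a i ⊗ₜ[k] b i) = 1) :
    (∀ φ : Module.Dual k A,
      (∑ i, (conjMap (k := k) (Sinv (a i)) (b i)).dualMap)
        ((∑ i, (conjMap (k := k) (a i) (b i)).dualMap) φ) = φ)
    ∧ (∀ φ : Module.Dual k A,
      (∑ i, (conjMap (k := k) (a i) (b i)).dualMap)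
        ((∑ i, (conjMap (k := k) (Sinv (a i)) (b i)).dualMap) φ) = φ)
    ∧ Function.Bijective (∑ i, (conjMap (k := k) (a i) (b i)).dualMap :
        Module.Dual k A →ₗ[k] Module.Dual k A) := by
  classical
  -- `(ε ⊗ id)(R) = 1` type statement, as `∑ ε(aᵢ) • (1 ⊗ bᵢ) = 1`
  have main : ∀ (ψ : A ⊗[k] A →ₗ[k] A),
      ∑ i, ψ (Coalgebra.comul (a i)) ⊗ₜ[k] b i
        = ∑ i, ∑ j, ψ (a i ⊗ₜ[k] a j) ⊗ₜ[k] (b i * b j) := by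
    intro ψ
    have h := congrArg (TensorProduct.map ψ (LinearMap.id : A →ₗ[k] A)) hex1
    simpa only [map_sum, TensorProduct.map_tmul, LinearMap.id_coe, id_eq,
      Finset.sum_mul_sum, Algebra.TensorProduct.tmul_mul_tmul, mul_one, one_mul] using h
  have hu : ∑ i, (counit (R := k) (a i) : k) • ((1 : A) ⊗ₜ[k] b i) = (1 : A ⊗[k] A) := by
    have hψε : ∀ c : A, ((TensorProduct.lid k A).toLinearMap ∘ₗ
        (counit (R := k)).rTensor A) (Coalgebra.comul c) = c := by
      intro c
      simp [Coalgebra.rTensor_counit_comul]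
    have hR := main ((TensorProduct.lid k A).toLinearMap ∘ₗ (counit (R := k)).rTensor A)
    simp only [hψε, LinearMap.comp_apply, LinearMap.rTensor_tmul, TensorProduct.lid_tmul,
      LinearEquiv.coe_coe] at hR
    -- hR : ∑ i, a i ⊗ b i = ∑ i, ∑ j, (ε (a i) • a j) ⊗ (b i * b j)
    have hur : (∑ i, (counit (R := k) (a i) : k) • ((1 : A) ⊗ₜ[k] b i)) *
        (∑ j, a j ⊗ₜ[k] b j) = ∑ j, a j ⊗ₜ[k] b j := by
      rw [Finset.sum_mul_sum]
      rw [hR]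
      refine Finset.sum_congr rfl fun i _ => Finset.sum_congr rfl fun j _ => ?_
      rw [smul_mul_assoc, Algebra.TensorProduct.tmul_mul_tmul, one_mul,
        TensorProduct.smul_tmul']
    calc ∑ i, (counit (R := k) (a i) : k) • ((1 : A) ⊗ₜ[k] b i)
        = (∑ i, (counit (R := k) (a i) : k) • ((1 : A) ⊗ₜ[k] b i)) *
            ((∑ i, a i ⊗ₜ[k] b i) * (∑ i, Sinv (a i) ⊗ₜ[k] b i)) := by
          rw [hRinv, mul_one]
      _ = ((∑ i, (counit (R := k) (a i) : k) • ((1 : A) ⊗ₜ[k] b i)) *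
            (∑ i, a i ⊗ₜ[k] b i)) * (∑ i, Sinv (a i) ⊗ₜ[k] b i) := (mul_assoc _ _ _).symm
      _ = (∑ i, a i ⊗ₜ[k] b i) * (∑ i, Sinv (a i) ⊗ₜ[k] b i) := by rw [hur]
      _ = 1 := hRinv
  -- the two key tensor identities
  have E1 : ∑ i, ∑ j, (a j * Sinv (a i)) ⊗ₜ[k] (b i * b j) = (1 : A ⊗[k] A) := by
    have hψ : ∀ c : A, (LinearMap.mul' k A ∘ₗ (TensorProduct.comm k A A).toLinearMap ∘ₗ
        TensorProduct.map Sinv LinearMap.id) (Coalgebra.comul c)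
          = (counit (R := k) c) • (1 : A) := by
      intro c
      have r := Coalgebra.Repr.arbitrary k c
      rw [← r.eq]
      simp only [map_sum, LinearMap.comp_apply, TensorProduct.map_tmul,
        TensorProduct.comm_tmul, LinearMap.mul'_apply, LinearMap.id_coe, id_eq,
        LinearEquiv.coe_coe]
      exact sum_right_mul_sinv Sinv hS1 hS2 r
    have h := main (LinearMap.mul' k A ∘ₗ (TensorProduct.comm k A A).toLinearMap ∘ₗ
        TensorProduct.map Sinv LinearMap.id)
    simp only [hψ, LinearMap.comp_apply, TensorProduct.map_tmul, TensorProduct.comm_tmul,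
      LinearMap.mul'_apply, LinearMap.id_coe, id_eq, LinearEquiv.coe_coe,
      TensorProduct.smul_tmul'] at h
    rw [← h]
    simpa only [smul_tmul'] using hu
  have E2 : ∑ i, ∑ j, (Sinv (a j) * a i) ⊗ₜ[k] (b i * b j) = (1 : A ⊗[k] A) := by
    have hψ : ∀ c : A, (LinearMap.mul' k A ∘ₗ TensorProduct.map Sinv LinearMap.id ∘ₗ
        (TensorProduct.comm k A A).toLinearMap) (Coalgebra.comul c)
          = (counit (R := k) c) • (1 : A) := by
      intro c
      have r := Coalgebra.Repr.arbitrary k c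
      rw [← r.eq]
      simp only [map_sum, LinearMap.comp_apply, TensorProduct.map_tmul,
        TensorProduct.comm_tmul, LinearMap.mul'_apply, LinearMap.id_coe, id_eq,
        LinearEquiv.coe_coe]
      exact sum_sinv_mul_left Sinv hS1 hS2 r
    have h := main (LinearMap.mul' k A ∘ₗ TensorProduct.map Sinv LinearMap.id ∘ₗ
        (TensorProduct.comm k A A).toLinearMap)
    simp only [hψ, LinearMap.comp_apply, TensorProduct.map_tmul, TensorProduct.comm_tmul,
      LinearMap.mul'_apply, LinearMap.id_coe, id_eq, LinearEquiv.coe_coe,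
      TensorProduct.smul_tmul'] at h
    rw [← h]
    simpa only [smul_tmul'] using hu
  -- pointwise versions
  have key1 : ∀ x : A, ∑ j, ∑ i, a i * (Sinv (a j) * x * b j) * b i = x := by
    intro x
    have h := congrArg (LinearMap.mul' k A ∘ₗ
      TensorProduct.map (LinearMap.mulRight k x) (LinearMap.id : A →ₗ[k] A)) E1
    simp only [map_sum, LinearMap.comp_apply, TensorProduct.map_tmul, LinearMap.mul'_apply,
      LinearMap.mulRight_apply, LinearMap.id_coe, id_eq, Algebra.TensorProduct.one_def,
      mul_one, one_mul] at h
    simp only [mul_assoc] at h ⊢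
    exact h
  have key2 : ∀ x : A, ∑ i, ∑ j, Sinv (a j) * (a i * x * b i) * b j = x := by
    intro x
    have h := congrArg (LinearMap.mul' k A ∘ₗ
      TensorProduct.map (LinearMap.mulRight k x) (LinearMap.id : A →ₗ[k] A)) E2
    simp only [map_sum, LinearMap.comp_apply, TensorProduct.map_tmul, LinearMap.mul'_apply,
      LinearMap.mulRight_apply, LinearMap.id_coe, id_eq, Algebra.TensorProduct.one_def,
      mul_one, one_mul] at h
    simp only [mul_assoc] at h ⊢
    exact h
  have part1 : ∀ φ : Module.Dual k A,
      (∑ i, (conjMap (k := k) (Sinv (a i)) (b i)).dualMap)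
        ((∑ i, (conjMap (k := k) (a i) (b i)).dualMap) φ) = φ := by
    intro φ
    refine LinearMap.ext fun x => ?_
    simp only [LinearMap.sum_apply, LinearMap.dualMap_apply, conjMap, LinearMap.comp_apply,
      LinearMap.mulLeft_apply, LinearMap.mulRight_apply]
    conv_rhs => rw [← key1 x]
    simp only [map_sum]
  have part2 : ∀ φ : Module.Dual k A,
      (∑ i, (conjMap (k := k) (a i) (b i)).dualMap)
        ((∑ i, (conjMap (k := k) (Sinv (a i)) (b i)).dualMap) φ) = φ := by
    intro φ
    refine LinearMap.ext fun x => ?_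
    simp only [LinearMap.sum_apply, LinearMap.dualMap_apply, conjMap, LinearMap.comp_apply,
      LinearMap.mulLeft_apply, LinearMap.mulRight_apply]
    conv_rhs => rw [← key2 x]
    simp only [map_sum]
  refine ⟨part1, part2, ?_, ?_⟩
  · intro u v huv
    rw [← part1 u, huv, part1 v]
  · intro ψ
    exact ⟨(∑ i, (conjMap (k := k) (Sinv (a i)) (b i)).dualMap) ψ, part2 ψ⟩
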